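/- Let 𝒜 be a unital C*-algebra, let a, b ∈ 𝒜 be positive elements, and let w₁, w₂ ∈ 𝒜 satisfy ‖w₁‖ ≤ 1 and ‖w₂‖ ≤ 1. Then ‖a^(1/2) w₁ a^(1/2) + b^(1/2) w₂ b^(1/2)‖ ≤ ‖a + b‖. -/

import Mathlib

/-- Cauchy–Schwarz for the two-column `A`-valued inner product:
`‖x₁* y₁ + x₂* y₂‖² ≤ ‖x₁* x₁ + x₂* x₂‖ ⬝ ‖y₁* y₁ + y₂* y₂‖`. -/
lemma two_col_cauchy_schwarz {A : Type*} [CStarAlgebra A]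
    [PartialOrder A] [StarOrderedRing A] (x₁ x₂ y₁ y₂ : A) :
    ‖star x₁ * y₁ + star x₂ * y₂‖ ^ 2 ≤
      ‖star x₁ * x₁ + star x₂ * x₂‖ * ‖star y₁ * y₁ + star y₂ * y₂‖ := by
  set z := star x₁ * y₁ + star x₂ * y₂ with hz
  set XX := star x₁ * x₁ + star x₂ * x₂ with hXX
  set YY := star y₁ * y₁ + star y₂ * y₂ with hYY
  have hXXnn : 0 ≤ XX := add_nonneg (star_mul_self_nonneg x₁) (star_mul_self_nonneg x₂)
  have hYYnn : 0 ≤ YY := add_nonneg (star_mul_self_nonneg y₁) (star_mul_self_nonneg y₂)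
  set c := ‖XX‖ with hc
  rcases eq_or_lt_of_le (norm_nonneg XX) with hc0 | hcpos
  · -- degenerate case : XX = 0, hence x₁ = x₂ = 0 and z = 0
    have hXX0 : XX = 0 := norm_eq_zero.mp hc0.symm
    have hx₁ : star x₁ * x₁ = 0 := by
      refine le_antisymm ?_ (star_mul_self_nonneg x₁)
      calc star x₁ * x₁ ≤ star x₁ * x₁ + star x₂ * x₂ :=
            le_add_of_nonneg_right (star_mul_self_nonneg x₂)
        _ = 0 := hXX0
    have hx₁0 : x₁ = 0 := by
      have h := CStarRing.norm_star_mul_self (x := x₁)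
      rw [hx₁, norm_zero] at h
      have : ‖x₁‖ = 0 := by nlinarith [norm_nonneg x₁]
      simpa using this
    have hx₂ : star x₂ * x₂ = 0 := by
      refine le_antisymm ?_ (star_mul_self_nonneg x₂)
      calc star x₂ * x₂ ≤ star x₁ * x₁ + star x₂ * x₂ :=
            le_add_of_nonneg_left (star_mul_self_nonneg x₁)
        _ = 0 := hXX0
    have hx₂0 : x₂ = 0 := by
      have h := CStarRing.norm_star_mul_self (x := x₂)
      rw [hx₂, norm_zero] at h
      have : ‖x₂‖ = 0 := by nlinarith [norm_nonneg x₂]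
      simpa using this
    have hz0 : z = 0 := by rw [hz, hx₁0, hx₂0]; simp
    rw [hz0]
    simp only [norm_zero, ne_eq, OfNat.ofNat_ne_zero, not_false_eq_true, zero_pow]
    exact mul_nonneg (norm_nonneg _) (norm_nonneg _)
  · -- main case : c > 0
    set p := c • y₁ - x₁ * z with hp
    set q := c • y₂ - x₂ * z with hq
    have hkey : star p * p + star q * q =
        (c * c) • YY - c • (star z * z) - c • (star z * z) + star z * (XX * z) := by
      rw [hp, hq, hz, hXX, hYY]
      simp only [star_sub, star_smul, star_trivial, star_mul, star_star, star_add]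
      simp only [sub_mul, mul_sub, smul_mul_assoc, mul_smul_comm, smul_smul, smul_sub,
        smul_add, add_mul, mul_add, mul_assoc]
      abel
    have h0 : 0 ≤ star p * p + star q * q :=
      add_nonneg (star_mul_self_nonneg p) (star_mul_self_nonneg q)
    have hconj : star z * (XX * z) ≤ c • (star z * z) := by
      have h := CStarAlgebra.star_left_conjugate_le_norm_smul (a := z) (b := XX) (IsSelfAdjoint.of_nonneg hXXnn)
      calc star z * (XX * z) = star z * XX * z := by rw [mul_assoc]
        _ ≤ ‖XX‖ • (star z * z) := h
        _ = c • (star z * z) := by rw [hc]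
    have hmain : c • (star z * z) ≤ (c * c) • YY := by
      have h1 : 0 ≤ (c * c) • YY - c • (star z * z) - c • (star z * z) + c • (star z * z) :=
        h0.trans (hkey.le.trans (add_le_add_right hconj _))
      have h2 : (c * c) • YY - c • (star z * z) - c • (star z * z) + c • (star z * z) =
          (c * c) • YY - c • (star z * z) := by abel
      rw [h2] at h1
      exact sub_nonneg.mp h1
    have hnorm : c * ‖star z * z‖ ≤ c * c * ‖YY‖ := by
      have hnn : 0 ≤ c • (star z * z) := smul_nonneg hcpos.le (star_mul_self_nonneg z)
      have h := CStarAlgebra.norm_le_norm_of_nonneg_of_le hnn hmain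
      rw [norm_smul, norm_smul, Real.norm_eq_abs, Real.norm_eq_abs,
        abs_of_pos hcpos, abs_of_nonneg (mul_nonneg hcpos.le hcpos.le)] at h
      exact h
    have hzz : ‖star z * z‖ = ‖z‖ ^ 2 := by
      rw [CStarRing.norm_star_mul_self]; ring
    rw [hzz] at hnorm
    calc ‖z‖ ^ 2 = c⁻¹ * (c * ‖z‖ ^ 2) := by rw [← mul_assoc, inv_mul_cancel₀ hcpos.ne', one_mul]
      _ ≤ c⁻¹ * (c * c * ‖YY‖) :=
          mul_le_mul_of_nonneg_left hnorm (inv_pos.mpr hcpos).le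
      _ = c * ‖YY‖ := by field_simp

theorem sqrt_contraction_sqrt_bound_cstar {A : Type*} [CStarAlgebra A]
    [PartialOrder A] [StarOrderedRing A]
    (a b w₁ w₂ : A) (ha : 0 ≤ a) (hb : 0 ≤ b)
    (hw₁ : ‖w₁‖ ≤ 1) (hw₂ : ‖w₂‖ ≤ 1) :
    ‖CFC.sqrt a * w₁ * CFC.sqrt a + CFC.sqrt b * w₂ * CFC.sqrt b‖ ≤ ‖a + b‖ := by
  set x₁ := CFC.sqrt a with hx₁
  set x₂ := CFC.sqrt b with hx₂
  have hx₁nn : 0 ≤ x₁ := CFC.sqrt_nonneg a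
  have hx₂nn : 0 ≤ x₂ := CFC.sqrt_nonneg b
  have hx₁sa : star x₁ = x₁ := (IsSelfAdjoint.of_nonneg hx₁nn).star_eq
  have hx₂sa : star x₂ = x₂ := (IsSelfAdjoint.of_nonneg hx₂nn).star_eq
  have hx₁sq : x₁ * x₁ = a := CFC.sqrt_mul_sqrt_self a ha
  have hx₂sq : x₂ * x₂ = b := CFC.sqrt_mul_sqrt_self b hb
  set y₁ := w₁ * x₁ with hy₁
  set y₂ := w₂ * x₂ with hy₂
  have hXX : star x₁ * x₁ + star x₂ * x₂ = a + b := by rw [hx₁sa, hx₂sa, hx₁sq, hx₂sq]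
  have hzeq : x₁ * w₁ * x₁ + x₂ * w₂ * x₂ = star x₁ * y₁ + star x₂ * y₂ := by
    rw [hx₁sa, hx₂sa, hy₁, hy₂, mul_assoc, mul_assoc]
  -- pointwise bounds on star yᵢ * yᵢ
  have hYYbound : ∀ (w x c : A), ‖w‖ ≤ 1 → star x = x → x * x = c →
      star (w * x) * (w * x) ≤ c := by
    intro w x c hw hxsa hxsq
    have h1 : star (w * x) * (w * x) = star x * (star w * w) * x := by
      rw [star_mul]; noncomm_ring
    have h2 : star x * (star w * w) * x ≤ ‖star w * w‖ • (star x * x) :=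
      CStarAlgebra.star_left_conjugate_le_norm_smul (IsSelfAdjoint.star_mul_self w)
    have h3 : ‖star w * w‖ ≤ 1 := by
      rw [CStarRing.norm_star_mul_self]
      nlinarith [norm_nonneg w]
    have h4 : ‖star w * w‖ • (star x * x) ≤ (1 : ℝ) • (star x * x) := by
      have h5 : (0 : A) ≤ ((1 : ℝ) - ‖star w * w‖) • (star x * x) :=
        smul_nonneg (by linarith) (star_mul_self_nonneg x)
      have h6 : ((1 : ℝ) - ‖star w * w‖) • (star x * x) =
          (1 : ℝ) • (star x * x) - ‖star w * w‖ • (star x * x) := sub_smul _ _ _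
      rw [h6] at h5
      exact sub_nonneg.mp h5
    calc star (w * x) * (w * x) = star x * (star w * w) * x := h1
      _ ≤ ‖star w * w‖ • (star x * x) := h2
      _ ≤ (1 : ℝ) • (star x * x) := h4
      _ = c := by rw [one_smul, hxsa, hxsq]
  have hYY1 : star y₁ * y₁ ≤ a := hYYbound w₁ x₁ a hw₁ hx₁sa hx₁sq
  have hYY2 : star y₂ * y₂ ≤ b := hYYbound w₂ x₂ b hw₂ hx₂sa hx₂sq
  have hYYle : star y₁ * y₁ + star y₂ * y₂ ≤ a + b := add_le_add hYY1 hYY2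
  have hYYnn : 0 ≤ star y₁ * y₁ + star y₂ * y₂ :=
    add_nonneg (star_mul_self_nonneg y₁) (star_mul_self_nonneg y₂)
  have hYYnorm : ‖star y₁ * y₁ + star y₂ * y₂‖ ≤ ‖a + b‖ :=
    CStarAlgebra.norm_le_norm_of_nonneg_of_le hYYnn hYYle
  have hCS := two_col_cauchy_schwarz x₁ x₂ y₁ y₂
  rw [hXX] at hCS
  rw [hzeq]
  have hsq : ‖star x₁ * y₁ + star x₂ * y₂‖ ^ 2 ≤ ‖a + b‖ ^ 2 := by
    calc ‖star x₁ * y₁ + star x₂ * y₂‖ ^ 2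
        ≤ ‖a + b‖ * ‖star y₁ * y₁ + star y₂ * y₂‖ := hCS
      _ ≤ ‖a + b‖ * ‖a + b‖ := mul_le_mul_of_nonneg_left hYYnorm (norm_nonneg _)
      _ = ‖a + b‖ ^ 2 := by ring
  nlinarith [norm_nonneg (star x₁ * y₁ + star x₂ * y₂), norm_nonneg (a + b)]
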